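/- Let G be a countable group acting measurably on a measurable space M, let μ be a non-degenerate probability measure on G, and let ν be a μ-stationary probability measure on M. Let E ⊆ M be a measurable subset such that for every g ∈ G either g·E = E or (g·E) ∩ E = ∅, and suppose there is an infinite family of pairwise-disjoint sets of the form g·E with g ∈ G. Then ν(E) = 0. -/

import Mathlib

open MeasureTheory Pointwise

/-- (Kaimanovich–Masur) Let a countable group `G` act measurably on a measurable space
`M`, let `μ` be a non-degenerate probability measure on `G` and `ν` a `μ`-stationary
probability measure on `M`. If `E` is a measurable set such that every translate `g • E`
either equals `E` or is disjoint from `E`, and there are infinitely many pairwise disjoint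
translates of `E`, then `ν E = 0`. -/
theorem stmt_12 {G M : Type*} [Group G] [Countable G]
    [MeasurableSpace M] [MulAction G M]
    (hmeas : ∀ g : G, Measurable fun x : M => g • x)
    (μ : G → ENNReal) (hμ : ∑' g, μ g = 1)
    (hnd : ∀ g : G, ∃ L : List G, L ≠ [] ∧ (∀ x ∈ L, 0 < μ x) ∧ L.prod = g)
    (ν : Measure M) [IsProbabilityMeasure ν]
    (hstat : ∀ E : Set M, MeasurableSet E →
      ν E = ∑' g : G, μ g * ν ((fun x => g • x) ⁻¹' E))
    (E : Set M) (hE : MeasurableSet E)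
    (halt : ∀ g : G, g • E = E ∨ Disjoint (g • E) E)
    (hinf : ∃ S : Set G, S.Infinite ∧
      ∀ g ∈ S, ∀ h ∈ S, g ≠ h → Disjoint (g • E) (h • E)) :
    ν E = 0 := by
  classical
  -- translates are measurable
  have hsmulE : ∀ g : G, g • E = (fun x : M => g⁻¹ • x) ⁻¹' E := by
    intro g
    rw [Set.preimage_smul, inv_inv]
  have hmeasE : ∀ g : G, MeasurableSet (g • E) := by
    intro g
    rw [hsmulE g]
    exact (hmeas g⁻¹) hE
  -- distinct translates are disjoint
  have hdisj : ∀ g h : G, g • E ≠ h • E → Disjoint (g • E) (h • E) := by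
    intro g h hne
    rcases halt (h⁻¹ * g) with h1 | h2
    · exfalso
      apply hne
      have := congrArg (fun s => h • s) h1
      simpa [smul_smul] using this
    · have h3 : Disjoint (h • ((h⁻¹ * g) • E)) (h • E) := by
        have hinj : Function.Injective (fun x : M => h • x) := MulAction.injective h
        have := Set.disjoint_image_of_injective hinj h2
        simpa [← Set.image_smul] using this
      rwa [smul_smul, mul_inv_cancel_left] at h3
  set t : G → ENNReal := fun g => ν (g • E) with ht
  have htle : ∀ g, t g ≤ 1 := fun g => prob_le_one
  set m : ENNReal := ⨆ g, t g with hm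
  have hml : ∀ g, t g ≤ m := fun g => le_iSup t g
  have hm1 : m ≤ 1 := iSup_le htle
  have hmtop : m ≠ ⊤ := (hm1.trans_lt ENNReal.one_lt_top).ne
  -- μ g ≤ 1
  have hμle : ∀ g, μ g ≤ 1 := by
    intro g; rw [← hμ]; exact ENNReal.le_tsum g
  have hμtop : ∀ g, μ g ≠ ⊤ := fun g => ((hμle g).trans_lt ENNReal.one_lt_top).ne
  -- stationarity in terms of t
  have hstat' : ∀ g : G, t g = ∑' h : G, μ h * t (h⁻¹ * g) := by
    intro g
    have hpre : ∀ k : G, ((fun x : M => k • x) ⁻¹' (g • E)) = (k⁻¹ * g) • E := by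
      intro k; rw [Set.preimage_smul, smul_smul]
    rw [ht]
    simp only [hstat (g • E) (hmeasE g)]
    exact tsum_congr fun k => by rw [hpre]
  suffices hm0 : m = 0 by
    have : t 1 ≤ m := hml 1
    rw [hm0, nonpos_iff_eq_zero] at this
    simpa [ht, one_smul] using this
  by_contra hm0
  have hmpos : 0 < m := pos_iff_ne_zero.2 hm0
  -- the supremum is attained
  obtain ⟨g₀, hg₀⟩ : ∃ g₀, t g₀ = m := by
    -- translates with measure ≥ m/2 form a finite family
    have hι : Set.Finite {i : {F : Set M // ∃ g : G, F = g • E} | m / 2 ≤ ν i.1} := by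
      refine MeasureTheory.Measure.finite_const_le_meas_of_disjoint_iUnion ν
        (ENNReal.div_pos hm0 (by norm_num)) (As := fun i : {F : Set M // ∃ g : G, F = g • E} => i.1) ?_ ?_ ?_
      · rintro ⟨F, g, rfl⟩; exact hmeasE g
      · rintro ⟨F, g, rfl⟩ ⟨F', g', rfl⟩ hne
        exact hdisj g g' (fun h => hne (Subtype.ext h))
      · exact (measure_lt_top ν _).ne
    -- the set of values of t exceeding m/2 is finite and nonempty
    have hW : {v : ENNReal | ∃ g : G, t g = v ∧ m / 2 < v}.Finite := by
      apply Set.Finite.subset (hι.image (fun i => ν i.1))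
      rintro v ⟨g, rfl, hv⟩
      exact ⟨⟨g • E, g, rfl⟩, le_of_lt hv, rfl⟩
    have hWne : {v : ENNReal | ∃ g : G, t g = v ∧ m / 2 < v}.Nonempty := by
      have : m / 2 < m := ENNReal.half_lt_self hm0 hmtop
      obtain ⟨g, hg⟩ := lt_iSup_iff.1 (hm.symm ▸ this : m / 2 < ⨆ g, t g)
      exact ⟨t g, g, rfl, hg⟩
    have hsup_eq : sSup {v : ENNReal | ∃ g : G, t g = v ∧ m / 2 < v} = m := by
      apply le_antisymm
      · exact csSup_le hWne (by rintro v ⟨g, rfl, _⟩; exact hml g)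
      · obtain ⟨w, g', hg', hw⟩ := hWne
        rw [hm]
        apply iSup_le
        intro g
        rcases le_or_gt (t g) (m / 2) with h | h
        · exact (h.trans hw.le).trans (le_csSup hW.bddAbove ⟨g', hg', hw⟩)
        · exact le_csSup hW.bddAbove ⟨g, rfl, h⟩
    obtain ⟨g₀, hg₀, -⟩ := hWne.csSup_mem hW
    exact ⟨g₀, hg₀.trans hsup_eq⟩
  -- maximum principle: if t g = m and μ h ≠ 0 then t (h⁻¹ * g) = m
  have hkey : ∀ g h : G, t g = m → 0 < μ h → t (h⁻¹ * g) = m := by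
    intro g h hg hh
    by_contra hne
    have hlt : t (h⁻¹ * g) < m := lt_of_le_of_ne (hml _) hne
    have h1 : m = ∑' k : G, μ k * t (k⁻¹ * g) := hg ▸ hstat' g
    have h2 : (∑' k : G, μ k * t (k⁻¹ * g)) =
        μ h * t (h⁻¹ * g) + ∑' k, ite (k = h) 0 (μ k * t (k⁻¹ * g)) :=
      ENNReal.tsum_eq_add_tsum_ite h
    have h3 : (∑' k, ite (k = h) 0 (μ k * t (k⁻¹ * g))) ≤
        (∑' k, ite (k = h) 0 (μ k)) * m := by
      rw [← ENNReal.tsum_mul_right]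
      apply ENNReal.tsum_le_tsum
      intro k
      split_ifs
      · simp
      · exact mul_le_mul_right (hml _) _
    have h4 : (∑' k, ite (k = h) 0 (μ k)) = 1 - μ h := by
      have haux := ENNReal.tsum_eq_add_tsum_ite (f := μ) h
      rw [hμ] at haux
      rw [haux, ENNReal.add_sub_cancel_left (hμtop h)]
    have h5 : μ h * t (h⁻¹ * g) + (1 - μ h) * m < μ h * m + (1 - μ h) * m := by
      apply ENNReal.add_lt_add_right
      · exact ENNReal.mul_ne_top ((tsub_le_self.trans_lt ENNReal.one_lt_top).ne) hmtop
      · exact (ENNReal.mul_lt_mul_iff_right hh.ne' (hμtop h)).2 hlt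
    have h6 : μ h * m + (1 - μ h) * m = m := by
      rw [← add_mul, add_tsub_cancel_of_le (hμle h), one_mul]
    have : m < m := by
      calc m = μ h * t (h⁻¹ * g) + ∑' k, ite (k = h) 0 (μ k * t (k⁻¹ * g)) := by
              rw [h1, h2]
        _ ≤ μ h * t (h⁻¹ * g) + (1 - μ h) * m := by
              exact add_le_add_right (h3.trans (by rw [h4])) _
        _ < μ h * m + (1 - μ h) * m := h5
        _ = m := h6
    exact lt_irrefl m this
  -- propagate along words: every translate has measure m
  have hword : ∀ L : List G, (∀ x ∈ L, 0 < μ x) → ∀ g, t g = m → t (L.prod⁻¹ * g) = m := by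
    intro L
    induction L with
    | nil => intro _ g hg; simpa using hg
    | cons a L ih =>
      intro hpos g hg
      have h1 : t (a⁻¹ * g) = m := hkey g a hg (hpos a List.mem_cons_self)
      have h2 := ih (fun x hx => hpos x (List.mem_cons_of_mem a hx)) (a⁻¹ * g) h1
      rw [List.prod_cons, mul_inv_rev, mul_assoc] at *
      exact h2
  have hall : ∀ g : G, t g = m := by
    intro g
    obtain ⟨L, _, hpos, hprod⟩ := hnd (g₀ * g⁻¹)
    have := hword L hpos g₀ hg₀
    rw [hprod] at this
    simpa [mul_assoc] using this
  -- infinitely many disjoint translates, each of measure m > 0 : contradiction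
  obtain ⟨S, hSinf, hSdisj⟩ := hinf
  have := hSinf.to_subtype
  have hUnion : ν (⋃ g : S, (g : G) • E) = ∑' g : S, ν ((g : G) • E) := by
    apply measure_iUnion
    · rintro ⟨g, hg⟩ ⟨h, hh⟩ hne
      exact hSdisj g hg h hh (fun he => hne (Subtype.ext he))
    · exact fun g => hmeasE g
  have htop : (∑' g : S, ν ((g : G) • E)) = ⊤ := by
    have : ∀ g : S, ν ((g : G) • E) = m := fun g => hall g
    rw [tsum_congr this]
    exact ENNReal.tsum_const_eq_top_of_ne_zero hm0
  have : ν (⋃ g : S, (g : G) • E) ≤ 1 := prob_le_one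
  rw [hUnion, htop] at this
  exact absurd this (by simp)
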